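/- If S is a normal bounded operator on a complex Hilbert space H, then for every bounded operator X on H, ‖S²X‖ + ‖XS²‖ ≥ 2‖SXS‖. -/

import Mathlib

theorem normal_agmi (H : Type*) [NormedAddCommGroup H] [InnerProductSpace ℂ H]
    [CompleteSpace H] (S : H →L[ℂ] H) (hS : (star S) * S = S * (star S))
    (X : H →L[ℂ] H) :
    ‖S ^ 2 * X‖ + ‖X * S ^ 2‖ ≥ 2 * ‖S * X * S‖ := by
  -- pointwise norm equality for a normal operator
  have hpt : ∀ y : H, ‖S y‖ = ‖(star S) y‖ := by
    intro y
    have h1 := ContinuousLinearMap.apply_norm_sq_eq_inner_adjoint_left S y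
    have h2 := ContinuousLinearMap.apply_norm_sq_eq_inner_adjoint_left (star S) y
    rw [← ContinuousLinearMap.star_eq_adjoint] at h1 h2
    rw [star_star] at h2
    have h3 : (star S).comp S = S.comp (star S) := hS
    rw [h3] at h1
    have h4 : ‖S y‖ ^ 2 = ‖(star S) y‖ ^ 2 := h1.trans h2.symm
    have := congrArg Real.sqrt h4
    simpa [Real.sqrt_sq, norm_nonneg] using this
  -- flip a leftmost S to star S inside an operator norm
  have hflip : ∀ R : H →L[ℂ] H, ‖S * R‖ = ‖star S * R‖ := by
    intro R
    apply le_antisymm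
    · apply ContinuousLinearMap.opNorm_le_bound _ (norm_nonneg _)
      intro x
      rw [ContinuousLinearMap.mul_apply, hpt, ← ContinuousLinearMap.mul_apply]
      exact ContinuousLinearMap.le_opNorm _ x
    · apply ContinuousLinearMap.opNorm_le_bound _ (norm_nonneg _)
      intro x
      rw [ContinuousLinearMap.mul_apply, ← hpt, ← ContinuousLinearMap.mul_apply]
      exact ContinuousLinearMap.le_opNorm _ x
  have ha : ‖S ^ 2 * X‖ = ‖S * star S * X‖ := by
    rw [sq, mul_assoc, hflip (S * X), ← mul_assoc, hS]
  have hb : ‖X * S ^ 2‖ = ‖S * star S * star X‖ := by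
    rw [← norm_star (X * S ^ 2), star_mul, star_pow, sq, mul_assoc,
      ← hflip (star S * star X), ← mul_assoc]
  set A := ‖S ^ 2 * X‖ with hA
  set B := ‖X * S ^ 2‖ with hB
  set T := S * X * S with hTdef
  set u := star S * star X with hu
  set c := S * star S * X * S with hc
  have hT : star T * T = u * c := by
    rw [hTdef, hu, hc, ← hS]
    simp only [star_mul]
    noncomm_ring
  have hQ : c * u = (S * star S * X) * (S * star S * star X) := by
    rw [hc, hu]; noncomm_ring
  have hcu : ‖c * u‖ ≤ A * B := by
    rw [hQ, ha, hb]
    exact norm_mul_le _ _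
  have habnn : (0:ℝ) ≤ A * B := mul_nonneg (norm_nonneg _) (norm_nonneg _)
  -- power identity
  have haux : ∀ m : ℕ, (u * c) ^ m * u = u * (c * u) ^ m := by
    intro m
    induction m with
    | zero => simp
    | succ k ih =>
      rw [pow_succ, pow_succ, mul_assoc, mul_assoc u c u, ← mul_assoc, ih, mul_assoc]
  have hpow : ∀ m : ℕ, (u * c) ^ (m + 1) = u * (c * u) ^ m * c := by
    intro m
    rw [pow_succ, ← mul_assoc, haux m]
  -- norm bound
  have hbnd : ∀ m : ℕ, 1 ≤ m → ‖(u * c) ^ (m + 1)‖ ≤ (‖u‖ * ‖c‖) * (A * B) ^ m := by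
    intro m hm
    calc ‖(u * c) ^ (m + 1)‖ = ‖u * (c * u) ^ m * c‖ := by rw [hpow m]
      _ ≤ ‖u * (c * u) ^ m‖ * ‖c‖ := norm_mul_le _ _
      _ ≤ (‖u‖ * ‖(c * u) ^ m‖) * ‖c‖ := by gcongr; exact norm_mul_le _ _
      _ ≤ (‖u‖ * ‖c * u‖ ^ m) * ‖c‖ := by gcongr; exact norm_pow_le' _ hm
      _ ≤ (‖u‖ * (A * B) ^ m) * ‖c‖ := by gcongr
      _ = (‖u‖ * ‖c‖) * (A * B) ^ m := by ring
  have hsa : IsSelfAdjoint (star T * T) := IsSelfAdjoint.star_mul_self T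
  have hnsq : ‖star T * T‖ = ‖T‖ ^ 2 := by rw [CStarRing.norm_star_mul_self, sq]
  have key : ∀ n : ℕ, (‖T‖ ^ 2) ^ (2 ^ (n + 1)) ≤
      (‖u‖ * ‖c‖) * (A * B) ^ (2 ^ (n + 1) - 1) := by
    intro n
    have hp : 0 < 2 ^ n := pow_pos (by norm_num) n
    have h2 : 2 ^ (n + 1) = 2 ^ n * 2 := pow_succ 2 n
    have hM : 2 ^ (n + 1) = (2 ^ (n + 1) - 1) + 1 := by omega
    have hm1 : 1 ≤ 2 ^ (n + 1) - 1 := by omega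
    calc (‖T‖ ^ 2) ^ (2 ^ (n + 1)) = ‖star T * T‖ ^ (2 ^ (n + 1)) := by rw [hnsq]
      _ = ‖(star T * T) ^ (2 ^ (n + 1))‖ := by
          have h5 := hsa.nnnorm_pow_two_pow (n + 1)
          rw [← coe_nnnorm, ← coe_nnnorm, h5, NNReal.coe_pow]
      _ = ‖(u * c) ^ ((2 ^ (n + 1) - 1) + 1)‖ := by rw [hT, ← hM]
      _ ≤ (‖u‖ * ‖c‖) * (A * B) ^ (2 ^ (n + 1) - 1) := hbnd _ hm1
  have hmain : ‖T‖ ^ 2 ≤ A * B := by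
    by_contra hlt
    push_neg at hlt
    rcases eq_or_lt_of_le habnn with h0 | hpos
    · have hk := key 0
      rw [← h0] at hk
      norm_num at hk
      have hTpos : (0:ℝ) < ‖T‖ ^ 2 := h0 ▸ hlt
      simp [hk] at hTpos
    · set q := ‖T‖ ^ 2 / (A * B) with hqdef
      have hq1 : 1 < q := (one_lt_div hpos).2 hlt
      obtain ⟨n, hn⟩ := pow_unbounded_of_one_lt ((‖u‖ * ‖c‖) / (A * B)) hq1
      have hle : q ^ n ≤ q ^ (2 ^ (n + 1)) := by
        apply pow_le_pow_right₀ hq1.le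
        exact le_trans (Nat.lt_two_pow_self (n := n)).le (Nat.pow_le_pow_right (by norm_num) (Nat.le_succ n))
      have hM : 2 ^ (n + 1) = (2 ^ (n + 1) - 1) + 1 := by
        have hp : 0 < 2 ^ (n + 1) := pow_pos (by norm_num) _
        omega
      have hstep : q ^ (2 ^ (n + 1)) ≤ (‖u‖ * ‖c‖) / (A * B) := by
        have hk := key n
        rw [hqdef, div_pow, div_le_div_iff₀ (pow_pos hpos _) hpos]
        calc (‖T‖ ^ 2) ^ (2 ^ (n + 1)) * (A * B)
            ≤ ((‖u‖ * ‖c‖) * (A * B) ^ (2 ^ (n + 1) - 1)) * (A * B) :=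
              mul_le_mul_of_nonneg_right hk hpos.le
          _ = (‖u‖ * ‖c‖) * (A * B) ^ ((2 ^ (n + 1) - 1) + 1) := by
              rw [mul_assoc, ← pow_succ]
          _ = (‖u‖ * ‖c‖) * (A * B) ^ (2 ^ (n + 1)) := by rw [← hM]
      linarith
  nlinarith [hmain, norm_nonneg T, norm_nonneg (S ^ 2 * X), norm_nonneg (X * S ^ 2),
    sq_nonneg (A - B), sq_nonneg (A + B - 2 * ‖T‖)]
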